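/- arXiv:1203.1809 — 2 statements merged into one kernel-verified Lean document; each statement's English description precedes it below -/
import Mathlib

section
/- In a symmetric setting (all agents have the same type set Θ_0 and the same valuation function), let r^0 = r be a non-deficit anonymous Groves mechanism and define the iterative sequence r^{k+1}(θ_{-i}) := ((n−1)/n)·r^k(θ_{-i}) + (1/n)·inf_{θ'_i ∈ Θ_0} { VCG(θ'_i,θ_{-i}) − Σ_{j≠i} r^k(θ'_{-j}) }, where θ' = (θ'_i,θ_{-i}) and all infima are assumed to exist in ℝ. Then for every k: (a) r^k is a permutation-independent function, so each r^k determines an anonymous Groves mechanism; (b) r^k is non-deficit; and (c) r^{k+1}(x) ≥ r^k(x) for every x ∈ Θ_0^{n−1}, i.e., r^k(θ_{-i}) is nondecreasing in k. -/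
/-!
STATEMENT 9: Symmetric setting: n+1 ≥ 2 agents, common type set Θ, common
valuation v : D → Θ → ℝ, finite nonempty D, efficient decision function f.
Let r⁰ = r be a non-deficit anonymous Groves mechanism (permutation-
independent r : Θ^n → ℝ), and define the iterative sequence
  r^{k+1}(θ_{-i}) = (n/(n+1))·r^k(θ_{-i})
      + (1/(n+1))·inf_{θ'_i ∈ Θ} { VCG(θ') − Σ_{j≠i} r^k(θ'_{-j}) },
θ' = Function.update θ i θ'_i, all infima existing in ℝ (the infimized sets
are assumed bounded below). Here n+1 agents, so (n−1)/n of the paper is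
n/(n+1) and 1/n is 1/(n+1). Then for every k: (a) r^k is permutation
independent (so determines an anonymous Groves mechanism); (b) r^k is
non-deficit; (c) r^{k+1}(x) ≥ r^k(x) for all x.
θ_{-i} is encoded as θ ∘ i.succAbove.
-/

noncomputable def VCGi {N : ℕ} {D : Type} [Fintype D] [Nonempty D]
    {Θ : Type} (v : D → Θ → ℝ) (f : (Fin N → Θ) → D)
    (i : Fin N) (θ : Fin N → Θ) : ℝ :=
  (Finset.univ.sup' Finset.univ_nonempty fun d =>
      ∑ j ∈ Finset.univ.erase i, v d (θ j)) -
    ∑ j ∈ Finset.univ.erase i, v (f θ) (θ j)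

noncomputable def VCGtot {N : ℕ} {D : Type} [Fintype D] [Nonempty D]
    {Θ : Type} (v : D → Θ → ℝ) (f : (Fin N → Θ) → D)
    (θ : Fin N → Θ) : ℝ :=
  ∑ i, VCGi v f i θ

lemma exists_perm_succAbove {n : ℕ} (π : Equiv.Perm (Fin (n+1))) (j : Fin (n+1)) :
    ∃ σ : Equiv.Perm (Fin n), ∀ m, π (j.succAbove m) = (π j).succAbove (σ m) := by
  refine ⟨(finSuccAboveEquiv j).trans
    ((π.subtypeEquiv fun a => ⟨fun h hc => h (π.injective hc), fun h hc => h (congrArg π hc)⟩).trans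
      (finSuccAboveEquiv (π j)).symm), fun m => ?_⟩
  have h := (finSuccAboveEquiv (π j)).apply_symm_apply
    ((π.subtypeEquiv fun a => ⟨fun h hc => h (π.injective hc), fun h hc => h (congrArg π hc)⟩)
      (finSuccAboveEquiv j m))
  simp only [Equiv.trans_apply]
  rw [Subtype.ext_iff, finSuccAboveEquiv_apply] at h
  simp only [Equiv.subtypeEquiv_apply, finSuccAboveEquiv_apply] at h
  exact h.symm

lemma VCGtot_comp_perm {N : ℕ} {D : Type} [Fintype D] [Nonempty D] {Θ : Type}
    (v : D → Θ → ℝ) (f : (Fin N → Θ) → D)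
    (hf : ∀ (θ : Fin N → Θ) (d : D), ∑ i, v d (θ i) ≤ ∑ i, v (f θ) (θ i))
    (θ : Fin N → Θ) (π : Equiv.Perm (Fin N)) :
    VCGtot v f (θ ∘ π) = VCGtot v f θ := by
  have hS : ∀ d, ∑ i, v d (θ (π i)) = ∑ i, v d (θ i) := fun d =>
    Equiv.sum_comp π fun i => v d (θ i)
  have heff : ∑ i, v (f (θ ∘ π)) (θ i) = ∑ i, v (f θ) (θ i) := by
    refine le_antisymm (hf θ _) ?_
    have h := hf (θ ∘ π) (f θ)
    simp only [Function.comp_apply] at h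
    rwa [hS, hS] at h
  have h1 : ∀ (w : Fin N → Θ) (i : Fin N),
      (Finset.univ.sup' Finset.univ_nonempty fun d => ∑ j ∈ Finset.univ.erase i, v d (w j))
        = Finset.univ.sup' Finset.univ_nonempty fun d => (∑ j, v d (w j)) - v d (w i) :=
    fun w i => Finset.sup'_congr _ rfl fun d _ => Finset.sum_erase_eq_sub (Finset.mem_univ i)
  have h2 : ∀ (d : D) (w : Fin N → Θ), ∑ i, ∑ j ∈ Finset.univ.erase i, v d (w j)
      = (N : ℝ) * (∑ j, v d (w j)) - (∑ j, v d (w j)) := by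
    intro d w
    have he : ∀ i, ∑ j ∈ Finset.univ.erase i, v d (w j) = (∑ j, v d (w j)) - v d (w i) :=
      fun i => Finset.sum_erase_eq_sub (Finset.mem_univ i)
    simp only [he]
    rw [Finset.sum_sub_distrib, Finset.sum_const, Finset.card_univ, Fintype.card_fin,
      nsmul_eq_mul]
  unfold VCGtot VCGi
  rw [Finset.sum_sub_distrib, Finset.sum_sub_distrib]
  congr 1
  · calc ∑ i, (Finset.univ.sup' Finset.univ_nonempty fun d =>
          ∑ j ∈ Finset.univ.erase i, v d ((θ ∘ π) j))
        = ∑ i, (Finset.univ.sup' Finset.univ_nonempty fun d =>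
            (∑ j, v d (θ j)) - v d (θ (π i))) := by
          refine Finset.sum_congr rfl fun i _ => ?_
          rw [h1 (θ ∘ π) i]
          refine Finset.sup'_congr _ rfl fun d _ => ?_
          simp only [Function.comp_apply]
          rw [hS]
      _ = ∑ i, (Finset.univ.sup' Finset.univ_nonempty fun d =>
            (∑ j, v d (θ j)) - v d (θ i)) :=
          Equiv.sum_comp π fun i => Finset.univ.sup' Finset.univ_nonempty fun d =>
            (∑ j, v d (θ j)) - v d (θ i)
      _ = ∑ i, (Finset.univ.sup' Finset.univ_nonempty fun d =>
            ∑ j ∈ Finset.univ.erase i, v d (θ j)) :=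
          Finset.sum_congr rfl fun i _ => (h1 θ i).symm
  · rw [h2, h2]
    have h3 : ∑ j, v (f (θ ∘ π)) ((θ ∘ π) j) = ∑ j, v (f θ) (θ j) := by
      calc ∑ j, v (f (θ ∘ π)) ((θ ∘ π) j) = ∑ j, v (f (θ ∘ π)) (θ (π j)) := rfl
        _ = ∑ j, v (f (θ ∘ π)) (θ j) := Equiv.sum_comp π fun j => v (f (θ ∘ π)) (θ j)
        _ = ∑ j, v (f θ) (θ j) := heff
    rw [h3]

lemma comp_succAbove_perm {n : ℕ} {Θ : Type} (g : (Fin n → Θ) → ℝ)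
    (hg : ∀ (x : Fin n → Θ) (σ : Equiv.Perm (Fin n)), g (fun m => x (σ m)) = g x)
    (η : Fin (n+1) → Θ) (π : Equiv.Perm (Fin (n+1))) (j : Fin (n+1)) :
    g ((η ∘ π) ∘ j.succAbove) = g (η ∘ (π j).succAbove) := by
  obtain ⟨σ, hσ⟩ := exists_perm_succAbove π j
  have h : (η ∘ π) ∘ j.succAbove = fun m => (η ∘ (π j).succAbove) (σ m) :=
    funext fun m => by simp [hσ m]
  rw [h, hg]

theorem stmt_9 {n : ℕ} (hn : 1 ≤ n) {D : Type} [Fintype D] [Nonempty D]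
    {Θ : Type} [Nonempty Θ]
    (v : D → Θ → ℝ) (f : (Fin (n+1) → Θ) → D)
    (hf : ∀ (θ : Fin (n+1) → Θ) (d : D),
      ∑ i, v d (θ i) ≤ ∑ i, v (f θ) (θ i))
    (r : (Fin n → Θ) → ℝ)
    (hperm : ∀ (x : Fin n → Θ) (σ : Equiv.Perm (Fin n)),
      r (fun i => x (σ⁻¹ i)) = r x)
    (hnd : ∀ θ : Fin (n+1) → Θ,
      ∑ i : Fin (n+1), r (θ ∘ i.succAbove) ≤ VCGtot v f θ)
    (R : ℕ → (Fin n → Θ) → ℝ) (hR0 : R 0 = r)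
    (hbdd : ∀ (k : ℕ) (i : Fin (n+1)) (θ : Fin (n+1) → Θ),
      BddBelow {y : ℝ | ∃ x : Θ, y = VCGtot v f (Function.update θ i x) -
        ∑ j ∈ Finset.univ.erase i, R k (Function.update θ i x ∘ j.succAbove)})
    (hrec : ∀ (k : ℕ) (i : Fin (n+1)) (θ : Fin (n+1) → Θ),
      R (k+1) (θ ∘ i.succAbove) =
        ((n : ℝ) / (n+1)) * R k (θ ∘ i.succAbove) +
        (1 / ((n : ℝ)+1)) * sInf {y : ℝ | ∃ x : Θ,
          y = VCGtot v f (Function.update θ i x) -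
            ∑ j ∈ Finset.univ.erase i, R k (Function.update θ i x ∘ j.succAbove)}) :
    (∀ (k : ℕ) (x : Fin n → Θ) (σ : Equiv.Perm (Fin n)),
      R k (fun i => x (σ⁻¹ i)) = R k x) ∧
    (∀ (k : ℕ) (θ : Fin (n+1) → Θ),
      ∑ i : Fin (n+1), R k (θ ∘ i.succAbove) ≤ VCGtot v f θ) ∧
    (∀ (k : ℕ) (x : Fin n → Θ), R k x ≤ R (k+1) x) := by
  classical
  obtain ⟨t₀⟩ := ‹Nonempty Θ›
  have hfrac : (0:ℝ) ≤ 1 / ((n:ℝ)+1) := by positivity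
  have hx0 : ∀ (t : Θ) (x : Fin n → Θ),
      (Fin.cons t x : Fin (n+1) → Θ) ∘ (0 : Fin (n+1)).succAbove = x := by
    intro t x; funext j
    simp [Fin.succAbove_zero]
  -- (b) non-deficit
  have hb : ∀ (k : ℕ) (θ : Fin (n+1) → Θ),
      ∑ i : Fin (n+1), R k (θ ∘ i.succAbove) ≤ VCGtot v f θ := by
    intro k
    induction k with
    | zero => intro θ; simp only [hR0]; exact hnd θ
    | succ k ih =>
      intro θ
      have hle : ∀ i : Fin (n+1), R (k+1) (θ ∘ i.succAbove) ≤
          ((n:ℝ)/(n+1)) * R k (θ ∘ i.succAbove) +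
            (1/((n:ℝ)+1)) * (VCGtot v f θ -
              ((∑ j : Fin (n+1), R k (θ ∘ j.succAbove)) - R k (θ ∘ i.succAbove))) := by
        intro i
        rw [hrec k i θ]
        have hmem : (VCGtot v f θ - ∑ j ∈ Finset.univ.erase i, R k (θ ∘ j.succAbove)) ∈
            {y : ℝ | ∃ x : Θ, y = VCGtot v f (Function.update θ i x) -
              ∑ j ∈ Finset.univ.erase i, R k (Function.update θ i x ∘ j.succAbove)} :=
          ⟨θ i, by rw [Function.update_eq_self]⟩
        have h := csInf_le (hbdd k i θ) hmem
        rw [Finset.sum_erase_eq_sub (Finset.mem_univ i)] at h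
        exact add_le_add le_rfl (mul_le_mul_of_nonneg_left h hfrac)
      calc ∑ i : Fin (n+1), R (k+1) (θ ∘ i.succAbove)
          ≤ ∑ i : Fin (n+1), (((n:ℝ)/(n+1)) * R k (θ ∘ i.succAbove) +
              (1/((n:ℝ)+1)) * (VCGtot v f θ -
                ((∑ j : Fin (n+1), R k (θ ∘ j.succAbove)) - R k (θ ∘ i.succAbove)))) :=
            Finset.sum_le_sum fun i _ => hle i
        _ = ∑ i : Fin (n+1), ((((n:ℝ)/(n+1)) * R k (θ ∘ i.succAbove) +
              (1/((n:ℝ)+1)) * R k (θ ∘ i.succAbove)) +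
              (1/((n:ℝ)+1)) * (VCGtot v f θ - ∑ j : Fin (n+1), R k (θ ∘ j.succAbove))) :=
            Finset.sum_congr rfl fun i _ => by ring
        _ = VCGtot v f θ := by
            rw [Finset.sum_add_distrib, Finset.sum_const, Finset.card_univ, Fintype.card_fin,
              nsmul_eq_mul]
            have hone : ∀ x : ℝ, ((n:ℝ)/(n+1)) * x + (1/((n:ℝ)+1)) * x = x := by
              intro x; field_simp
            simp only [hone]
            have hne : ((n:ℝ)+1) ≠ 0 := by positivity
            push_cast
            field_simp
            ring
  -- (c) monotone
  have hc : ∀ (k : ℕ) (x : Fin n → Θ), R k x ≤ R (k+1) x := by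
    intro k x
    have hrec0 := hrec k 0 (Fin.cons t₀ x)
    rw [hx0 t₀ x] at hrec0
    have hlow : R k x ≤ sInf {y : ℝ | ∃ t : Θ,
        y = VCGtot v f (Function.update (Fin.cons t₀ x) 0 t) -
          ∑ j ∈ Finset.univ.erase (0 : Fin (n+1)),
            R k (Function.update (Fin.cons t₀ x) 0 t ∘ j.succAbove)} := by
      refine le_csInf ⟨VCGtot v f (Function.update (Fin.cons t₀ x) 0 t₀) -
          ∑ j ∈ Finset.univ.erase (0 : Fin (n+1)),
            R k (Function.update (Fin.cons t₀ x) 0 t₀ ∘ j.succAbove), t₀, rfl⟩ ?_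
      rintro y ⟨t, rfl⟩
      have hb' := hb k (Function.update (Fin.cons t₀ x) 0 t)
      rw [← Finset.add_sum_erase _ _ (Finset.mem_univ (0 : Fin (n+1)))] at hb'
      have hxt : Function.update (Fin.cons t₀ x) (0 : Fin (n+1)) t ∘
          (0 : Fin (n+1)).succAbove = x := by
        rw [Fin.update_cons_zero]; exact hx0 t x
      rw [hxt] at hb'
      linarith
    rw [hrec0]
    have h1 := mul_le_mul_of_nonneg_left hlow hfrac
    have h2 : ((n:ℝ)/(n+1)) * R k x + (1/((n:ℝ)+1)) * R k x = R k x := by field_simp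
    linarith
  -- (a) permutation invariance
  have ha : ∀ (k : ℕ) (x : Fin n → Θ) (σ : Equiv.Perm (Fin n)),
      R k (fun i => x (σ⁻¹ i)) = R k x := by
    intro k
    induction k with
    | zero => simp only [hR0]; exact hperm
    | succ k ih =>
      have ih' : ∀ (x : Fin n → Θ) (τ : Equiv.Perm (Fin n)),
          R k (fun i => x (τ i)) = R k x := fun x τ => by
        simpa using ih x τ⁻¹
      intro x σ
      set π : Equiv.Perm (Fin (n+1)) :=
        ((finSuccEquiv n).trans (Equiv.optionCongr σ⁻¹)).trans (finSuccEquiv n).symm with hπ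
      have hπ0 : π 0 = 0 := by simp [hπ]
      have hπs : ∀ j : Fin n, π j.succ = (σ⁻¹ j).succ := fun j => by simp [hπ]
      have hcons : ∀ t : Θ, (Fin.cons t x : Fin (n+1) → Θ) ∘ π =
          Fin.cons t (fun i => x (σ⁻¹ i)) := by
        intro t; funext j
        refine Fin.cases ?_ (fun m => ?_) j
        · simp only [Function.comp_apply, hπ0, Fin.cons_zero]
        · simp only [Function.comp_apply, hπs m, Fin.cons_succ]
      have hA := hrec k 0 (Fin.cons t₀ x)
      have hB := hrec k 0 (Fin.cons t₀ (fun i => x (σ⁻¹ i)))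
      rw [hx0 t₀ x] at hA
      rw [hx0 t₀ (fun i => x (σ⁻¹ i))] at hB
      rw [hA, hB, ih x σ]
      have hkey : ∀ t : Θ,
          VCGtot v f (Fin.cons t (fun i => x (σ⁻¹ i)) : Fin (n+1) → Θ) -
            ∑ j ∈ Finset.univ.erase (0 : Fin (n+1)),
              R k ((Fin.cons t (fun i => x (σ⁻¹ i)) : Fin (n+1) → Θ) ∘ j.succAbove)
          = VCGtot v f (Fin.cons t x : Fin (n+1) → Θ) -
            ∑ j ∈ Finset.univ.erase (0 : Fin (n+1)),
              R k ((Fin.cons t x : Fin (n+1) → Θ) ∘ j.succAbove) := by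
        intro t
        rw [← hcons t]
        have hgt : ∀ j : Fin (n+1),
            R k (((Fin.cons t x : Fin (n+1) → Θ) ∘ π) ∘ j.succAbove) =
              R k ((Fin.cons t x : Fin (n+1) → Θ) ∘ (π j).succAbove) :=
          comp_succAbove_perm (R k) ih' (Fin.cons t x) π
        congr 1
        · exact VCGtot_comp_perm v f hf (Fin.cons t x) π
        · rw [Finset.sum_erase_eq_sub (Finset.mem_univ (0 : Fin (n+1))),
            Finset.sum_erase_eq_sub (Finset.mem_univ (0 : Fin (n+1)))]
          congr 1
          · calc ∑ j : Fin (n+1), R k (((Fin.cons t x : Fin (n+1) → Θ) ∘ π) ∘ j.succAbove)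
                = ∑ j : Fin (n+1), R k ((Fin.cons t x : Fin (n+1) → Θ) ∘ (π j).succAbove) :=
                  Finset.sum_congr rfl fun j _ => hgt j
              _ = ∑ j : Fin (n+1), R k ((Fin.cons t x : Fin (n+1) → Θ) ∘ j.succAbove) :=
                  Equiv.sum_comp π fun j =>
                    R k ((Fin.cons t x : Fin (n+1) → Θ) ∘ j.succAbove)
          · rw [hgt 0, hπ0]
      have hset : {y : ℝ | ∃ t : Θ,
          y = VCGtot v f (Function.update (Fin.cons t₀ (fun i => x (σ⁻¹ i))) 0 t) -
            ∑ j ∈ Finset.univ.erase (0 : Fin (n+1)),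
              R k (Function.update (Fin.cons t₀ (fun i => x (σ⁻¹ i))) 0 t ∘ j.succAbove)}
          = {y : ℝ | ∃ t : Θ,
          y = VCGtot v f (Function.update (Fin.cons t₀ x) 0 t) -
            ∑ j ∈ Finset.univ.erase (0 : Fin (n+1)),
              R k (Function.update (Fin.cons t₀ x) 0 t ∘ j.succAbove)} := by
        ext y
        simp only [Set.mem_setOf_eq, Fin.update_cons_zero]
        constructor
        · rintro ⟨t, rfl⟩; exact ⟨t, hkey t⟩
        · rintro ⟨t, rfl⟩; exact ⟨t, (hkey t).symm⟩
        
      rw [hset]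
  exact ⟨ha, hb, hc⟩
end

section
/- In a symmetric setting (all agents have the same type set Θ_0 and the same valuation function), let r^0 = r be a non-deficit anonymous Groves mechanism and define r^{k+1}(θ_{-i}) := ((n−1)/n)·r^k(θ_{-i}) + (1/n)·inf_{θ'_i ∈ Θ_0} { VCG(θ'_i,θ_{-i}) − Σ_{j≠i} r^k(θ'_{-j}) }, where all infima are assumed to exist in ℝ. Then the sequence r^k converges pointwise as k → ∞ to a function r^∞ : Θ_0^{n−1} → ℝ, and r^∞ determines a non-deficit anonymous Groves mechanism that is individually undominated among non-deficit Groves mechanisms. -/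
open Finset Filter

lemma perm_succAbove {N : ℕ} (τ : Equiv.Perm (Fin (N+1))) (j : Fin (N+1)) :
    ∃ π : Equiv.Perm (Fin N), ∀ m, τ (j.succAbove m) = (τ j).succAbove (π m) := by
  set e : Option (Fin N) ≃ Option (Fin N) :=
    ((finSuccEquiv' j).symm.trans ((τ : Fin (N+1) ≃ Fin (N+1)).trans (finSuccEquiv' (τ j)))) with he
  refine ⟨Equiv.removeNone e, fun m => ?_⟩
  have h1 : e (some m) = finSuccEquiv' (τ j) (τ (j.succAbove m)) := by
    simp [he, finSuccEquiv'_symm_some]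
  have hne : τ (j.succAbove m) ≠ τ j := fun h => (j.succAbove_ne m) (τ.injective h)
  have h2 : ∃ b, e (some m) = some b := by
    rw [h1]
    rcases Fin.exists_succAbove_eq hne with ⟨b, hb⟩
    exact ⟨b, by rw [← hb, finSuccEquiv'_succAbove]⟩
  have h3 := Equiv.removeNone_some e h2
  rw [h1] at h3
  have h4 := congrArg (finSuccEquiv' (τ j)).symm h3.symm
  simpa [finSuccEquiv'_symm_some] using h4

lemma vcgtot_eq {n : ℕ} {D : Type} [Fintype D] [Nonempty D] {Θ : Type}
    (v : D → Θ → ℝ) (f : (Fin (n+1) → Θ) → D)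
    (hf : ∀ (θ : Fin (n+1) → Θ) (d : D), ∑ i, v d (θ i) ≤ ∑ i, v (f θ) (θ i))
    (θ : Fin (n+1) → Θ) :
    VCGtot v f θ =
      (∑ i, Finset.univ.sup' Finset.univ_nonempty fun d =>
          ∑ j ∈ Finset.univ.erase i, v d (θ j))
        - n * (Finset.univ.sup' Finset.univ_nonempty fun d => ∑ j, v d (θ j)) := by
  have hW : (Finset.univ.sup' Finset.univ_nonempty fun d => ∑ j, v d (θ j))
      = ∑ j, v (f θ) (θ j) :=
    le_antisymm (Finset.sup'_le _ _ fun d _ => hf θ d) (Finset.le_sup' (fun d => ∑ j, v d (θ j)) (Finset.mem_univ (f θ)))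
  rw [hW]
  unfold VCGtot VCGi
  rw [Finset.sum_sub_distrib]
  congr 1
  have h : ∀ i : Fin (n+1), ∑ j ∈ Finset.univ.erase i, v (f θ) (θ j)
      = (∑ j, v (f θ) (θ j)) - v (f θ) (θ i) :=
    fun i => Finset.sum_erase_eq_sub (Finset.mem_univ i)
  simp only [h]
  rw [Finset.sum_sub_distrib, Finset.sum_const, Finset.card_univ, Fintype.card_fin]
  ring


lemma vcgtot_perm {n : ℕ} {D : Type} [Fintype D] [Nonempty D] {Θ : Type}
    (v : D → Θ → ℝ) (f : (Fin (n+1) → Θ) → D)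
    (hf : ∀ (θ : Fin (n+1) → Θ) (d : D), ∑ i, v d (θ i) ≤ ∑ i, v (f θ) (θ i))
    (θ : Fin (n+1) → Θ) (τ : Equiv.Perm (Fin (n+1))) :
    VCGtot v f (θ ∘ τ) = VCGtot v f θ := by
  rw [vcgtot_eq v f hf, vcgtot_eq v f hf]
  congr 1
  · have h1 : ∀ i : Fin (n+1),
        (Finset.univ.sup' Finset.univ_nonempty fun d =>
          ∑ j ∈ Finset.univ.erase i, v d ((θ ∘ τ) j))
        = Finset.univ.sup' Finset.univ_nonempty fun d =>
          ∑ j ∈ Finset.univ.erase (τ i), v d (θ j) := by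
      intro i
      congr 1
      funext d
      refine Finset.sum_equiv τ (fun j => ?_) (fun j _ => rfl)
      simp [Finset.mem_erase, EmbeddingLike.apply_eq_iff_eq]
    simp only [h1]
    exact Equiv.sum_comp τ fun i => Finset.univ.sup' Finset.univ_nonempty fun d =>
      ∑ j ∈ Finset.univ.erase i, v d (θ j)
  · congr 2
    funext d
    exact Equiv.sum_comp τ fun j => v d (θ j)

lemma snoc_comp_succAbove_last {n : ℕ} {Θ : Type} (x : Fin n → Θ) (t : Θ) :
    (Fin.snoc x t : Fin (n+1) → Θ) ∘ (Fin.last n).succAbove = x := by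
  funext m
  simp [Fin.succAbove_last]

lemma update_comp_succAbove {n : ℕ} {Θ : Type} (θ : Fin (n+1) → Θ) (i : Fin (n+1)) (t : Θ) :
    Function.update θ i t ∘ i.succAbove = θ ∘ i.succAbove := by
  funext m
  simp [Function.update_of_ne (Fin.succAbove_ne i m)]

open Finset Filter in
private lemma sum_alg {n : ℕ} (a : Fin (n+1) → ℝ) (V : ℝ) :
    ∑ i, (((n:ℝ)/((n:ℝ)+1)) * a i + (1/((n:ℝ)+1)) * (V - ((∑ j, a j) - a i))) = V := by
  have hne : ((n:ℝ)+1) ≠ 0 := by positivity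
  have hexp : ∀ i : Fin (n+1), ((n:ℝ)/((n:ℝ)+1)) * a i + (1/((n:ℝ)+1)) * (V - ((∑ j, a j) - a i))
      = a i + (1/((n:ℝ)+1)) * (V - (∑ j, a j)) := by
    intro i; field_simp; ring
  rw [Finset.sum_congr rfl fun i _ => hexp i]
  rw [Finset.sum_add_distrib, Finset.sum_const, Finset.card_univ, Fintype.card_fin, nsmul_eq_mul]
  push_cast
  field_simp
  ring

theorem stmt_10 {n : ℕ} (hn : 1 ≤ n) {D : Type} [Fintype D] [Nonempty D]
    {Θ : Type} [Nonempty Θ]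
    (v : D → Θ → ℝ) (f : (Fin (n+1) → Θ) → D)
    (hf : ∀ (θ : Fin (n+1) → Θ) (d : D),
      ∑ i, v d (θ i) ≤ ∑ i, v (f θ) (θ i))
    (r : (Fin n → Θ) → ℝ)
    (hperm : ∀ (x : Fin n → Θ) (σ : Equiv.Perm (Fin n)),
      r (fun i => x (σ⁻¹ i)) = r x)
    (hnd : ∀ θ : Fin (n+1) → Θ,
      ∑ i : Fin (n+1), r (θ ∘ i.succAbove) ≤ VCGtot v f θ)
    (R : ℕ → (Fin n → Θ) → ℝ) (hR0 : R 0 = r)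
    (hbdd : ∀ (k : ℕ) (i : Fin (n+1)) (θ : Fin (n+1) → Θ),
      BddBelow {y : ℝ | ∃ x : Θ, y = VCGtot v f (Function.update θ i x) -
        ∑ j ∈ Finset.univ.erase i, R k (Function.update θ i x ∘ j.succAbove)})
    (hrec : ∀ (k : ℕ) (i : Fin (n+1)) (θ : Fin (n+1) → Θ),
      R (k+1) (θ ∘ i.succAbove) =
        ((n : ℝ) / (n+1)) * R k (θ ∘ i.succAbove) +
        (1 / ((n : ℝ)+1)) * sInf {y : ℝ | ∃ x : Θ,
          y = VCGtot v f (Function.update θ i x) -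
            ∑ j ∈ Finset.univ.erase i, R k (Function.update θ i x ∘ j.succAbove)}) :
    ∃ Rinf : (Fin n → Θ) → ℝ,
      (∀ x : Fin n → Θ,
        Filter.Tendsto (fun k => R k x) Filter.atTop (nhds (Rinf x))) ∧
      (∀ (x : Fin n → Θ) (σ : Equiv.Perm (Fin n)),
        Rinf (fun i => x (σ⁻¹ i)) = Rinf x) ∧
      (∀ θ : Fin (n+1) → Θ,
        ∑ i : Fin (n+1), Rinf (θ ∘ i.succAbove) ≤ VCGtot v f θ) ∧
      ¬ ∃ r' : Fin (n+1) → (Fin (n+1) → Θ) → ℝ,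
        (∀ (i : Fin (n+1)) (θ θ' : Fin (n+1) → Θ),
          (∀ j, j ≠ i → θ j = θ' j) → r' i θ = r' i θ') ∧
        (∀ θ : Fin (n+1) → Θ, ∑ i, r' i θ ≤ VCGtot v f θ) ∧
        (∀ (i : Fin (n+1)) (θ : Fin (n+1) → Θ), Rinf (θ ∘ i.succAbove) ≤ r' i θ) ∧
        (∃ (i : Fin (n+1)) (θ : Fin (n+1) → Θ), Rinf (θ ∘ i.succAbove) < r' i θ) := by
  classical
  obtain ⟨t₀⟩ := ‹Nonempty Θ›
  have hP0 : ∀ (x : Fin n → Θ) (σ : Equiv.Perm (Fin n)), r (x ∘ σ) = r x := by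
    intro x σ
    have h := hperm x σ⁻¹
    simpa [Function.comp_def] using h
  -- non-deficit at every stage
  have hND : ∀ k (θ : Fin (n+1) → Θ),
      ∑ i : Fin (n+1), R k (θ ∘ i.succAbove) ≤ VCGtot v f θ := by
    intro k
    induction k with
    | zero => intro θ; rw [hR0]; exact hnd θ
    | succ k ih =>
      intro θ
      have hkey : ∀ i : Fin (n+1),
          R (k+1) (θ ∘ i.succAbove) ≤ ((n:ℝ)/((n:ℝ)+1)) * R k (θ ∘ i.succAbove)
            + (1/((n:ℝ)+1)) * (VCGtot v f θ -
              ((∑ j : Fin (n+1), R k (θ ∘ j.succAbove)) - R k (θ ∘ i.succAbove))) := by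
        intro i
        rw [hrec k i θ]
        have h1 : sInf {y : ℝ | ∃ x : Θ, y = VCGtot v f (Function.update θ i x) -
            ∑ j ∈ Finset.univ.erase i, R k (Function.update θ i x ∘ j.succAbove)}
            ≤ VCGtot v f θ - ∑ j ∈ Finset.univ.erase i, R k (θ ∘ j.succAbove) := by
          apply csInf_le (hbdd k i θ)
          exact ⟨θ i, by rw [Function.update_eq_self]⟩
        have h2 : ∑ j ∈ Finset.univ.erase i, R k (θ ∘ j.succAbove)
            = (∑ j : Fin (n+1), R k (θ ∘ j.succAbove)) - R k (θ ∘ i.succAbove) :=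
          Finset.sum_erase_eq_sub (Finset.mem_univ i)
        rw [h2] at h1
        have h3 : (0:ℝ) ≤ 1/((n:ℝ)+1) := by positivity
        have h4 := mul_le_mul_of_nonneg_left h1 h3
        linarith
      calc ∑ i : Fin (n+1), R (k+1) (θ ∘ i.succAbove)
          ≤ ∑ i : Fin (n+1), (((n:ℝ)/((n:ℝ)+1)) * R k (θ ∘ i.succAbove)
            + (1/((n:ℝ)+1)) * (VCGtot v f θ -
              ((∑ j : Fin (n+1), R k (θ ∘ j.succAbove)) - R k (θ ∘ i.succAbove)))) :=
            Finset.sum_le_sum fun i _ => hkey i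
        _ = VCGtot v f θ := sum_alg _ _
  -- monotone in k
  have hmonostep : ∀ k (x : Fin n → Θ), R k x ≤ R (k+1) x := by
    intro k x
    have hr := hrec k (Fin.last n) (Fin.snoc x t₀)
    rw [snoc_comp_succAbove_last] at hr
    have hlow : R k x ≤ sInf {y : ℝ | ∃ x' : Θ,
        y = VCGtot v f (Function.update (Fin.snoc x t₀) (Fin.last n) x') -
        ∑ j ∈ Finset.univ.erase (Fin.last n),
          R k (Function.update (Fin.snoc x t₀) (Fin.last n) x' ∘ j.succAbove)} := by
      refine le_csInf ⟨_, t₀, rfl⟩ ?_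
      rintro y ⟨x', rfl⟩
      have hnd' := hND k (Function.update (Fin.snoc x t₀) (Fin.last n) x')
      have hsplit : ∑ j ∈ Finset.univ.erase (Fin.last n),
            R k (Function.update (Fin.snoc x t₀) (Fin.last n) x' ∘ j.succAbove)
          = (∑ j : Fin (n+1), R k (Function.update (Fin.snoc x t₀) (Fin.last n) x' ∘ j.succAbove))
            - R k (Function.update (Fin.snoc x t₀) (Fin.last n) x' ∘ (Fin.last n).succAbove) :=
        Finset.sum_erase_eq_sub (Finset.mem_univ _)
      have hlastterm : Function.update (Fin.snoc x t₀) (Fin.last n) x' ∘ (Fin.last n).succAbove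
          = x := by rw [update_comp_succAbove, snoc_comp_succAbove_last]
      rw [hlastterm] at hsplit
      linarith [hnd', hsplit]
    have h2 : (0:ℝ) < 1/((n:ℝ)+1) := by positivity
    have h3 : ((n:ℝ)/((n:ℝ)+1)) * R k x + (1/((n:ℝ)+1)) * R k x = R k x := by
      have hne : ((n:ℝ)+1) ≠ 0 := by positivity
      field_simp
    have h4 := mul_le_mul_of_nonneg_left hlow h2.le
    rw [hr]
    linarith
  have hmono : ∀ x : Fin n → Θ, Monotone fun k => R k x :=
    fun x => monotone_nat_of_le_succ fun k => hmonostep k x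
  -- bounded above
  have hub : ∀ (x : Fin n → Θ) (k : ℕ), R k x ≤ VCGtot v f (Fin.snoc x t₀)
      - ∑ j ∈ Finset.univ.erase (Fin.last n), R 0 (Fin.snoc x t₀ ∘ j.succAbove) := by
    intro x k
    have h := hND k (Fin.snoc x t₀)
    have h2 : ∑ j ∈ Finset.univ.erase (Fin.last n), R k (Fin.snoc x t₀ ∘ j.succAbove)
        = (∑ j : Fin (n+1), R k (Fin.snoc x t₀ ∘ j.succAbove))
          - R k (Fin.snoc x t₀ ∘ (Fin.last n).succAbove) :=
      Finset.sum_erase_eq_sub (Finset.mem_univ _)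
    have h3 : ∑ j ∈ Finset.univ.erase (Fin.last n), R 0 (Fin.snoc x t₀ ∘ j.succAbove)
        ≤ ∑ j ∈ Finset.univ.erase (Fin.last n), R k (Fin.snoc x t₀ ∘ j.succAbove) :=
      Finset.sum_le_sum fun j _ => hmono _ (Nat.zero_le k)
    rw [snoc_comp_succAbove_last] at h2
    linarith [h, h2, h3]
  have hbddA : ∀ x : Fin n → Θ, BddAbove (Set.range fun k => R k x) := by
    intro x
    refine ⟨VCGtot v f (Fin.snoc x t₀)
      - ∑ j ∈ Finset.univ.erase (Fin.last n), R 0 (Fin.snoc x t₀ ∘ j.succAbove), ?_⟩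
    rintro _ ⟨k, rfl⟩
    exact hub x k
  set Rinf : (Fin n → Θ) → ℝ := fun x => ⨆ k, R k x with hRinf
  have htend : ∀ x : Fin n → Θ,
      Filter.Tendsto (fun k => R k x) Filter.atTop (nhds (Rinf x)) :=
    fun x => tendsto_atTop_ciSup (hmono x) (hbddA x)
  have hle : ∀ (k : ℕ) (x : Fin n → Θ), R k x ≤ Rinf x :=
    fun k x => le_ciSup (hbddA x) k
  -- permutation invariance at every stage
  have hpermk : ∀ k (x : Fin n → Θ) (σ : Equiv.Perm (Fin n)), R k (x ∘ σ) = R k x := by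
    intro k
    induction k with
    | zero => intro x σ; rw [hR0]; exact hP0 x σ
    | succ k ih =>
      intro x σ
      set τ : Equiv.Perm (Fin (n+1)) :=
        ((finSuccEquiv' (Fin.last n)).trans (Equiv.optionCongr σ)).trans
          (finSuccEquiv' (Fin.last n)).symm with hτ
      have hτlast : τ (Fin.last n) = Fin.last n := by
        simp [hτ, finSuccEquiv'_at]
      have hτcast : ∀ m : Fin n, τ (Fin.castSucc m) = Fin.castSucc (σ m) := by
        intro m
        simp only [hτ, Equiv.trans_apply, Equiv.optionCongr_apply]
        rw [finSuccEquiv'_below (Fin.castSucc_lt_last m)]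
        show (finSuccEquiv' (Fin.last n)).symm (Option.map (⇑σ) (some m)) = (σ m).castSucc
        rw [Option.map_some]
        exact finSuccEquiv'_symm_some_below (Fin.castSucc_lt_last (σ m))
      have hcomp : ∀ y : Θ, (Fin.snoc x y : Fin (n+1) → Θ) ∘ τ = Fin.snoc (x ∘ σ) y := by
        intro y; funext m
        induction m using Fin.lastCases with
        | last => simp [Function.comp, hτlast]
        | cast m => simp [Function.comp, hτcast]
      have hAB : ∀ y' : Θ,
          VCGtot v f (Function.update (Fin.snoc (x ∘ σ) t₀) (Fin.last n) y') -
            ∑ j ∈ Finset.univ.erase (Fin.last n),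
              R k (Function.update (Fin.snoc (x ∘ σ) t₀) (Fin.last n) y' ∘ j.succAbove)
          = VCGtot v f (Function.update (Fin.snoc x t₀) (Fin.last n) y') -
            ∑ j ∈ Finset.univ.erase (Fin.last n),
              R k (Function.update (Fin.snoc x t₀) (Fin.last n) y' ∘ j.succAbove) := by
        intro y'
        rw [Fin.update_snoc_last, Fin.update_snoc_last, ← hcomp y']
        congr 1
        · exact vcgtot_perm v f hf _ τ
        · have hterm : ∀ j : Fin (n+1),
              R k (((Fin.snoc x y' : Fin (n+1) → Θ) ∘ τ) ∘ j.succAbove)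
                = R k ((Fin.snoc x y' : Fin (n+1) → Θ) ∘ (τ j).succAbove) := by
            intro j
            obtain ⟨π, hπ⟩ := perm_succAbove τ j
            have heq : ((Fin.snoc x y' : Fin (n+1) → Θ) ∘ τ) ∘ j.succAbove
                = ((Fin.snoc x y' : Fin (n+1) → Θ) ∘ (τ j).succAbove) ∘ π := by
              funext m; simp [Function.comp, hπ m]
            rw [heq, ih]
          simp only [hterm]
          refine Finset.sum_equiv τ ?_ fun j _ => rfl
          intro j
          simp only [Finset.mem_erase, Finset.mem_univ, and_true]
          constructor
          · intro h hc
            exact h (by rw [← hτlast] at hc; exact τ.injective hc)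
          · intro h hc
            exact h (by rw [hc, hτlast])
      have h1 := hrec k (Fin.last n) (Fin.snoc (x ∘ σ) t₀)
      have h2 := hrec k (Fin.last n) (Fin.snoc x t₀)
      rw [snoc_comp_succAbove_last] at h1 h2
      simp only [hAB] at h1
      show R (k+1) (x ∘ σ) = R (k+1) x
      rw [h1, h2, ih x σ]
  refine ⟨Rinf, htend, ?_, ?_, ?_⟩
  · -- permutation invariance of the limit
    intro x σ
    have : (fun i => x (σ⁻¹ i)) = x ∘ (σ⁻¹ : Equiv.Perm (Fin n)) := rfl
    rw [this, hRinf]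
    exact iSup_congr fun k => hpermk k x σ⁻¹
  · -- non-deficit of the limit
    intro θ
    have ht : Filter.Tendsto (fun k => ∑ i : Fin (n+1), R k (θ ∘ i.succAbove))
        Filter.atTop (nhds (∑ i : Fin (n+1), Rinf (θ ∘ i.succAbove))) :=
      tendsto_finset_sum _ fun i _ => htend _
    exact le_of_tendsto ht (Filter.Eventually.of_forall fun k => hND k θ)
  · -- individually undominated
    rintro ⟨r', hind, hnd', hdom, i₀, θ0, hstrict⟩
    have hsinf : Filter.Tendsto (fun k =>
        sInf {y : ℝ | ∃ x : Θ, y = VCGtot v f (Function.update θ0 i₀ x) -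
          ∑ j ∈ Finset.univ.erase i₀, R k (Function.update θ0 i₀ x ∘ j.succAbove)})
        Filter.atTop (nhds (Rinf (θ0 ∘ i₀.succAbove))) := by
      have hfn : (fun k => sInf {y : ℝ | ∃ x : Θ, y = VCGtot v f (Function.update θ0 i₀ x) -
            ∑ j ∈ Finset.univ.erase i₀, R k (Function.update θ0 i₀ x ∘ j.succAbove)})
          = fun k => ((n:ℝ)+1) * R (k+1) (θ0 ∘ i₀.succAbove)
              - (n:ℝ) * R k (θ0 ∘ i₀.succAbove) := by
        funext k
        rw [hrec k i₀ θ0]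
        have hne : ((n:ℝ)+1) ≠ 0 := by positivity
        field_simp
        ring
      rw [hfn]
      have h2 : Filter.Tendsto (fun k => R (k+1) (θ0 ∘ i₀.succAbove)) Filter.atTop
          (nhds (Rinf (θ0 ∘ i₀.succAbove))) :=
        (htend _).comp (Filter.tendsto_add_atTop_nat 1)
      have h3 := (h2.const_mul ((n:ℝ)+1)).sub ((htend (θ0 ∘ i₀.succAbove)).const_mul (n:ℝ))
      have h4 : ((n:ℝ)+1) * Rinf (θ0 ∘ i₀.succAbove) - (n:ℝ) * Rinf (θ0 ∘ i₀.succAbove)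
          = Rinf (θ0 ∘ i₀.succAbove) := by ring
      rw [← h4]
      exact h3
    obtain ⟨k, hk⟩ := (hsinf.eventually_lt_const hstrict).exists
    have hne0 : {y : ℝ | ∃ x : Θ, y = VCGtot v f (Function.update θ0 i₀ x) -
        ∑ j ∈ Finset.univ.erase i₀, R k (Function.update θ0 i₀ x ∘ j.succAbove)}.Nonempty :=
      ⟨_, t₀, rfl⟩
    obtain ⟨y, ⟨x', rfl⟩, hy⟩ := exists_lt_of_csInf_lt hne0 hk
    have hθeq : r' i₀ (Function.update θ0 i₀ x') = r' i₀ θ0 :=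
      hind i₀ (Function.update θ0 i₀ x') θ0 fun j hj => Function.update_of_ne hj x' θ0
    have hsum : ∑ j ∈ Finset.univ.erase i₀, Rinf (Function.update θ0 i₀ x' ∘ j.succAbove)
        ≤ ∑ j ∈ Finset.univ.erase i₀, r' j (Function.update θ0 i₀ x') :=
      Finset.sum_le_sum fun j _ => hdom j _
    have hRk : ∑ j ∈ Finset.univ.erase i₀, R k (Function.update θ0 i₀ x' ∘ j.succAbove)
        ≤ ∑ j ∈ Finset.univ.erase i₀, Rinf (Function.update θ0 i₀ x' ∘ j.succAbove) :=
      Finset.sum_le_sum fun j _ => hle k _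
    have hsplit : ∑ i : Fin (n+1), r' i (Function.update θ0 i₀ x')
        = r' i₀ (Function.update θ0 i₀ x')
          + ∑ j ∈ Finset.univ.erase i₀, r' j (Function.update θ0 i₀ x') :=
      (Finset.add_sum_erase _ _ (Finset.mem_univ i₀)).symm
    have hV := hnd' (Function.update θ0 i₀ x')
    linarith
end
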